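/- arXiv:1310.7354 — 4 statements merged into one kernel-verified Lean document; each statement's English description precedes it below -/
import Mathlib

section
/- In F₃[[X]], the power series g(X) = 1 − X⁻¹r(X³) − X⁻²(r(X³) − r(X³)²) (which lies in F₃[[X]] since r(X³) ≡ X³ mod X⁹) is the unique solution in F₃[[X]] of the equation X³g(X)³ + X·g(X)² + g(X) − 1 = 0. -/
open Classical in
/-- The power series `r(X³) = Σ_{m ≥ 0} X^{3^{m+1}} ∈ 𝔽₃[[X]]`. -/
noncomputable def rser3 : PowerSeries (ZMod 3) :=
  PowerSeries.mk fun n => if ∃ m : ℕ, n = 3 ^ (m + 1) then 1 else 0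

open PowerSeries

instance : CharP (PowerSeries (ZMod 3)) 3 :=
  charP_of_injective_ringHom (PowerSeries.C_injective (R := ZMod 3)) 3

lemma three_eq_zero' : (3 : PowerSeries (ZMod 3)) = 0 := by
  have := CharP.cast_eq_zero (PowerSeries (ZMod 3)) 3
  exact_mod_cast this

lemma six_eq_zero' : (6 : PowerSeries (ZMod 3)) = 0 := by
  have h : (6 : PowerSeries (ZMod 3)) = 2 * 3 := by norm_num
  rw [h, three_eq_zero', mul_zero]

lemma nine_eq_zero' : (9 : PowerSeries (ZMod 3)) = 0 := by
  have h : (9 : PowerSeries (ZMod 3)) = 3 * 3 := by norm_num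
  rw [h, three_eq_zero', mul_zero]

lemma coeff_pow_three (f : PowerSeries (ZMod 3)) (n : ℕ) :
    PowerSeries.coeff n (f ^ 3) =
      if 3 ∣ n then PowerSeries.coeff (n / 3) f else 0 := by
  set p := trunc (n+1) f with hp
  have hb : (X : PowerSeries (ZMod 3)) ^ (n+1) ∣ (f - ↑p) := by
    rw [PowerSeries.X_pow_dvd_iff]
    intro m hm
    simp [hp, map_sub, Polynomial.coeff_coe, coeff_trunc, hm]
  obtain ⟨b, hbb⟩ := hb
  have hf : f = (↑p : PowerSeries (ZMod 3)) + X^(n+1) * b := by rw [← hbb]; ring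
  have hpow : f ^ 3 = (↑p : PowerSeries (ZMod 3))^3 + (X^(n+1) * b)^3 := by
    rw [hf]; exact add_pow_char _ _ _
  have hp3 : (p : Polynomial (ZMod 3)) ^ 3 = Polynomial.expand _ 3 p := by
    have := Polynomial.map_frobenius_expand (p := 3) p
    rwa [ZMod.frobenius_zmod, Polynomial.map_id, eq_comm] at this
  have h2 : PowerSeries.coeff n ((X^(n+1) * b : PowerSeries (ZMod 3))^3) = 0 := by
    have h3 : ((X : PowerSeries (ZMod 3))^(n+1) * b)^3 = X^(3*(n+1)) * b^3 := by ring
    rw [h3, PowerSeries.coeff_X_pow_mul' _ _ _, if_neg (by omega)]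
  rw [hpow, map_add, h2, add_zero, ← Polynomial.coe_pow, hp3, Polynomial.coeff_coe,
    Polynomial.coeff_expand (by norm_num)]
  split_ifs with h
  · rw [hp, coeff_trunc, if_pos (by omega)]
  · rfl

lemma rser3_cube : rser3 ^ 3 = rser3 - X ^ 3 := by
  ext n
  rw [map_sub, coeff_pow_three, PowerSeries.coeff_X_pow]
  simp only [rser3, coeff_mk]
  by_cases h3 : ∃ m, n = 3 ^ (m + 1)
  · obtain ⟨m, rfl⟩ := h3
    match m with
    | 0 =>
      rw [if_pos (show (3:ℕ) ∣ 3^(0+1) by norm_num),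
        show (3:ℕ)^(0+1)/3 = 1 by norm_num,
        if_neg (show ¬∃ k : ℕ, (1:ℕ) = 3^(k+1) by
          rintro ⟨k, hk⟩
          have := Nat.le_self_pow (Nat.succ_ne_zero k) 3
          omega),
        if_pos (⟨0, rfl⟩ : ∃ k : ℕ, (3:ℕ)^(0+1) = 3^(k+1)),
        if_pos (show (3:ℕ)^(0+1) = 3 by norm_num)]
      decide
    | m+1 =>
      have hge : 9 ≤ 3^(m+2) := by
        calc (9:ℕ) = 3^2 := by norm_num
        _ ≤ 3^(m+2) := Nat.pow_le_pow_right (by norm_num) (by omega)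
      rw [if_pos (dvd_pow_self 3 (Nat.succ_ne_zero (m+1)) : (3:ℕ) ∣ 3^(m+1+1)),
        show (3:ℕ)^(m+1+1)/3 = 3^(m+1) by
          rw [pow_succ, Nat.mul_div_cancel _ (by norm_num)],
        if_pos (⟨m, rfl⟩ : ∃ k : ℕ, (3:ℕ)^(m+1) = 3^(k+1)),
        if_pos (⟨m+1, rfl⟩ : ∃ k : ℕ, (3:ℕ)^(m+1+1) = 3^(k+1)),
        if_neg (show ¬((3:ℕ)^(m+1+1) = 3) by omega)]
      decide
  · rw [if_neg h3,
      if_neg (show ¬(n = 3) from fun hn => h3 ⟨0, by rw [hn]; norm_num⟩)]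
    split_ifs with h1 h2
    · exfalso; obtain ⟨k, hk⟩ := h2
      exact h3 ⟨k+1, by rw [← Nat.div_mul_cancel h1, hk]; ring⟩
    · simp
    · simp

lemma rser3_Xsq_dvd : (X : PowerSeries (ZMod 3)) ^ 2 ∣ rser3 := by
  rw [PowerSeries.X_pow_dvd_iff]
  intro m hm
  simp only [rser3, coeff_mk]
  rw [if_neg]
  rintro ⟨k, hk⟩
  have := Nat.le_self_pow (Nat.succ_ne_zero k) 3
  omega

/-- `g(X) = 1 - X⁻¹ r(X³) - X⁻²(r(X³) - r(X³)²)` (equivalently,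
`X²·g = X² - X·r(X³) - (r(X³) - r(X³)²)`) is the unique solution in `𝔽₃[[X]]` of
`X³g³ + Xg² + g - 1 = 0`. -/
theorem stmt7 (g : PowerSeries (ZMod 3)) :
    PowerSeries.X ^ 3 * g ^ 3 + PowerSeries.X * g ^ 2 + g - 1 = 0 ↔
      PowerSeries.X ^ 2 * g =
        PowerSeries.X ^ 2 - PowerSeries.X * rser3 - (rser3 - rser3 ^ 2) := by
  have hs := rser3_cube
  have hX6 : (X : PowerSeries (ZMod 3)) ^ 6 ≠ 0 := pow_ne_zero _ X_ne_zero
  obtain ⟨t, ht⟩ := rser3_Xsq_dvd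
  constructor
  · intro h
    rw [ht] at hs ⊢
    set v : PowerSeries (ZMod 3) := g - 1 + X*t + t - X^2*t^2 with hv
    set u : PowerSeries (ZMod 3) := g + 1 - X*t - t + X^2*t^2 with hu
    have key : X^6 * (v * (X^3*v^2 + X*u + 1)) = 0 := by
      rw [hv, hu]
      linear_combination (norm := (ring_nf; simp [three_eq_zero', six_eq_zero', nine_eq_zero']))
        (X:PowerSeries (ZMod 3))^6 * h
        - ((X:PowerSeries (ZMod 3))^9*t^3 + 2*X^5*t + X^6 + X^4) * hs
    have h1 : v * (X^3*v^2 + X*u + 1) = 0 := by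
      apply mul_left_cancel₀ hX6
      rw [key, mul_zero]
    have h2 : (X^3*v^2 + X*u + 1 : PowerSeries (ZMod 3)) ≠ 0 := by
      intro hc
      have := congrArg (PowerSeries.constantCoeff : PowerSeries (ZMod 3) →+* ZMod 3) hc
      simp [map_add, map_mul, map_pow] at this
    have hv0 : v = 0 := by
      rcases mul_eq_zero.mp h1 with h' | h'
      · exact h'
      · exact absurd h' h2
    linear_combination (X:PowerSeries (ZMod 3))^2 * hv0
  · intro h
    apply mul_left_cancel₀ hX6
    rw [mul_zero]
    linear_combination (norm := (ring_nf; simp [three_eq_zero', six_eq_zero', nine_eq_zero']))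
      ((X:PowerSeries (ZMod 3))^3*((X^2*g)^2
        + (X^2*g)*(X^2 - X*rser3 - (rser3 - rser3^2))
        + (X^2 - X*rser3 - (rser3 - rser3^2))^2)
        + X^3*(X^2*g + (X^2 - X*rser3 - (rser3 - rser3^2))) + X^4) * h
      + ((X:PowerSeries (ZMod 3))^3*rser3^3 + 2*X^3*rser3 + X^6 + X^4) * hs
end

section
/- Define sᵢⱼ ∈ F₃ by Σ sᵢⱼ XⁱYʲ = (1 − X⁻¹r(X³) − X⁻²(r(X³) − r(X³)²))/(1 − XY³) in F₃[[X,Y]], and let tᵢⱼ = s_{3i,3j}. Then Σ tᵢⱼ XⁱYʲ = (1 − r(X)Y + (r(X)² − r(X))Y²)/(1 − XY³). -/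
open Classical in
/-- The two-variable power series `r(X) = Σ_{m ≥ 0} X^{3^m} ∈ 𝔽₃[[X,Y]]`. -/
noncomputable def rX : MvPowerSeries (Fin 2) (ZMod 3) :=
  fun s => if s 1 = 0 ∧ ∃ m : ℕ, s 0 = 3 ^ m then 1 else 0

open Classical in
/-- The two-variable power series `r(X³) = Σ_{m ≥ 0} X^{3^{m+1}} ∈ 𝔽₃[[X,Y]]`. -/
noncomputable def rX3 : MvPowerSeries (Fin 2) (ZMod 3) :=
  fun s => if s 1 = 0 ∧ ∃ m : ℕ, s 0 = 3 ^ (m + 1) then 1 else 0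

namespace Stmt8aux

open MvPowerSeries Finset

abbrev PS := MvPowerSeries (Fin 2) (ZMod 3)

noncomputable def fs (a b : ℕ) : Fin 2 →₀ ℕ := Finsupp.single 0 a + Finsupp.single 1 b

@[simp] lemma fs_apply0 (a b : ℕ) : fs a b 0 = a := by simp [fs]
@[simp] lemma fs_apply1 (a b : ℕ) : fs a b 1 = b := by simp [fs]

lemma eq_fs (d : Fin 2 →₀ ℕ) : d = fs (d 0) (d 1) := by
  ext s; fin_cases s <;> simp [fs]

lemma fs_smul (a b : ℕ) : 3 • fs a b = fs (3 * a) (3 * b) := by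
  ext s; fin_cases s <;> simp

lemma fs_sub (a b c d : ℕ) : fs a b - fs c d = fs (a - c) (b - d) := by
  ext s; fin_cases s <;> simp [Finsupp.tsub_apply]

lemma fs_le (a b c d : ℕ) : fs c d ≤ fs a b ↔ c ≤ a ∧ d ≤ b := by
  constructor
  · intro h; rw [Finsupp.le_def] at h; exact ⟨by simpa using h 0, by simpa using h 1⟩
  · rintro ⟨h1, h2⟩; rw [Finsupp.le_def]; intro s; fin_cases s <;> simpa

lemma fs_eq (a b c d : ℕ) : fs a b = fs c d ↔ a = c ∧ b = d := by
  constructor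
  · intro h; exact ⟨by rw [← fs_apply0 a b, h, fs_apply0], by rw [← fs_apply1 a b, h, fs_apply1]⟩
  · rintro ⟨rfl, rfl⟩; rfl

@[simp] lemma fs_zero : fs 0 0 = 0 := by ext s; fin_cases s <;> simp

lemma fs_eq_zero (a b : ℕ) : fs a b = 0 ↔ a = 0 ∧ b = 0 := by
  rw [show (0 : Fin 2 →₀ ℕ) = fs 0 0 from fs_zero.symm, fs_eq]

lemma smul_injective : Function.Injective (fun u : Fin 2 →₀ ℕ => 3 • u) := by
  intro a b h
  ext s
  have := congrArg (fun f : Fin 2 →₀ ℕ => f s) h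
  simp only [Finsupp.smul_apply, smul_eq_mul] at this
  omega

def Good (v : Fin 2 →₀ ℕ) : Prop := 3 ∣ v 0 ∧ 3 ∣ v 1

lemma good_add {v w : Fin 2 →₀ ℕ} (hv : Good v) (hw : Good w) : Good (v + w) :=
  ⟨by simpa using dvd_add hv.1 hw.1, by simpa using dvd_add hv.2 hw.2⟩

lemma good_exists {v : Fin 2 →₀ ℕ} (hv : Good v) : ∃ u, v = 3 • u := by
  obtain ⟨⟨a, ha⟩, ⟨b, hb⟩⟩ := hv
  refine ⟨fs a b, ?_⟩
  rw [fs_smul]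
  conv_lhs => rw [eq_fs v]
  rw [ha, hb]

noncomputable def emb : ((Fin 2 →₀ ℕ) × (Fin 2 →₀ ℕ)) ↪ ((Fin 2 →₀ ℕ) × (Fin 2 →₀ ℕ)) :=
  ⟨fun p => (3 • p.1, 3 • p.2), by
    intro a b h
    simp only [Prod.mk.injEq] at h
    exact Prod.ext (smul_injective h.1) (smul_injective h.2)⟩

lemma exp_mul {E F P Q : PS}
    (hE1 : ∀ v, ¬ Good v → coeff v E = 0)
    (hE2 : ∀ u, coeff (3 • u) E = coeff u P)
    (hF1 : ∀ v, ¬ Good v → coeff v F = 0)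
    (hF2 : ∀ u, coeff (3 • u) F = coeff u Q) :
    (∀ v, ¬ Good v → coeff v (E * F) = 0) ∧
    (∀ u, coeff (3 • u) (E * F) = coeff u (P * Q)) := by
  constructor
  · intro v hv
    rw [coeff_mul]
    apply Finset.sum_eq_zero
    intro p hp
    rw [Finset.HasAntidiagonal.mem_antidiagonal] at hp
    by_cases h1 : Good p.1
    · by_cases h2 : Good p.2
      · exact absurd (hp ▸ good_add h1 h2) hv
      · rw [hF1 _ h2, mul_zero]
    · rw [hE1 _ h1, zero_mul]
  · intro u
    rw [coeff_mul, coeff_mul]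
    have hsub : (antidiagonal u).map emb ⊆ antidiagonal ((3 : ℕ) • u) := by
      intro p hp
      rw [Finset.mem_map] at hp
      obtain ⟨q, hq, rfl⟩ := hp
      rw [Finset.HasAntidiagonal.mem_antidiagonal] at hq ⊢
      simp only [emb, Function.Embedding.coeFn_mk]
      change 3 • q.1 + 3 • q.2 = 3 • u
      rw [← smul_add, hq]
    have hvan : ∀ p ∈ antidiagonal ((3:ℕ) • u), p ∉ (antidiagonal u).map emb →
        coeff p.1 E * coeff p.2 F = 0 := by
      intro p hp hnp
      rw [Finset.HasAntidiagonal.mem_antidiagonal] at hp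
      by_cases h1 : Good p.1
      · by_cases h2 : Good p.2
        · exfalso
          obtain ⟨a, ha⟩ := good_exists h1
          obtain ⟨b, hb⟩ := good_exists h2
          apply hnp
          rw [Finset.mem_map]
          refine ⟨(a, b), ?_, by change (3 • a, 3 • b) = p; rw [← ha, ← hb]⟩
          rw [Finset.HasAntidiagonal.mem_antidiagonal]
          apply smul_injective
          simp only
          rw [smul_add, ← ha, ← hb, hp]
        · rw [hF1 _ h2, mul_zero]
      · rw [hE1 _ h1, zero_mul]
    rw [← Finset.sum_subset hsub hvan, Finset.sum_map]
    apply Finset.sum_congr rfl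
    intro p hp
    simp only [emb, Function.Embedding.coeFn_mk]
    change coeff (3 • p.1) E * coeff (3 • p.2) F = _
    rw [hE2, hF2]

lemma coeff_rX3_bad : ∀ v : Fin 2 →₀ ℕ, ¬ Good v → MvPowerSeries.coeff v rX3 = 0 := by
  intro v hv
  rw [coeff_apply, rX3, if_neg]
  rintro ⟨h1, m, h0⟩
  exact hv ⟨⟨3 ^ m, by rw [h0]; ring⟩, by simp [h1]⟩

lemma coeff_rX3_smul : ∀ u : Fin 2 →₀ ℕ,
    MvPowerSeries.coeff (3 • u) rX3 = MvPowerSeries.coeff u rX := by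
  intro u
  rw [coeff_apply, coeff_apply, rX3, rX]
  simp only [Finsupp.smul_apply, smul_eq_mul]
  congr 1
  rw [eq_iff_iff]
  constructor
  · rintro ⟨h1, m, h0⟩
    exact ⟨by omega, m, by rw [pow_succ] at h0; omega⟩
  · rintro ⟨h1, m, h0⟩
    exact ⟨by omega, m, by rw [pow_succ]; omega⟩

lemma coeff_rX3_mul3 (a b : ℕ) :
    MvPowerSeries.coeff (fs (3 * a) (3 * b)) rX3
      = MvPowerSeries.coeff (fs a b) rX := by
  rw [← fs_smul, coeff_rX3_smul]

lemma coeff_rX3sq_bad : ∀ v : Fin 2 →₀ ℕ, ¬ Good v →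
    MvPowerSeries.coeff v (rX3 ^ 2) = 0 := by
  intro v hv
  rw [pow_two]
  exact (exp_mul coeff_rX3_bad coeff_rX3_smul coeff_rX3_bad coeff_rX3_smul).1 v hv

lemma coeff_rX3sq_mul3 (a b : ℕ) :
    MvPowerSeries.coeff (fs (3 * a) (3 * b)) (rX3 ^ 2)
      = MvPowerSeries.coeff (fs a b) (rX ^ 2) := by
  rw [← fs_smul, pow_two, pow_two]
  exact (exp_mul coeff_rX3_bad coeff_rX3_smul coeff_rX3_bad coeff_rX3_smul).2 (fs a b)

lemma coeff_mono_mul (G : PS) (a b A B : ℕ) :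
    MvPowerSeries.coeff (fs A B) ((X 0 : PS) ^ a * (X 1) ^ b * G) =
      if a ≤ A ∧ b ≤ B then MvPowerSeries.coeff (fs (A - a) (B - b)) G else 0 := by
  have h1 : (X 0 : PS) ^ a * (X 1) ^ b = monomial (fs a b) 1 := by
    rw [X_pow_eq, X_pow_eq, monomial_mul_monomial, one_mul]; rfl
  rw [h1, coeff_monomial_mul]
  by_cases h : a ≤ A ∧ b ≤ B
  · rw [if_pos ((fs_le ..).mpr h), if_pos h, one_mul, fs_sub]
  · rw [if_neg h, if_neg]
    intro hc; exact h ((fs_le ..).mp hc)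

lemma coeff_mul_ypow (G : PS) (b A B : ℕ) :
    MvPowerSeries.coeff (fs A B) (G * (X 1 : PS) ^ b) =
      if b ≤ B then MvPowerSeries.coeff (fs A (B - b)) G else 0 := by
  rw [X_pow_eq, coeff_mul_monomial]
  have hsingle : (Finsupp.single 1 b : Fin 2 →₀ ℕ) = fs 0 b := by simp [fs]
  rw [hsingle]
  by_cases h : b ≤ B
  · rw [if_pos ((fs_le ..).mpr ⟨Nat.zero_le _, h⟩), if_pos h, fs_sub, mul_one, Nat.sub_zero]
  · rw [if_neg, if_neg h]
    intro hc; exact h ((fs_le ..).mp hc).2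

lemma coeff_one_fs (a b : ℕ) :
    MvPowerSeries.coeff (fs a b) (1 : PS) = if a = 0 ∧ b = 0 then 1 else 0 := by
  classical
  rw [coeff_one]
  by_cases h : a = 0 ∧ b = 0
  · rw [if_pos ((fs_eq_zero ..).mpr h), if_pos h]
  · rw [if_neg (fun hc => h ((fs_eq_zero ..).mp hc)), if_neg h]

end Stmt8aux
open Stmt8aux MvPowerSeries in
/-- If `S = (1 - X⁻¹r(X³) - X⁻²(r(X³) - r(X³)²))/(1 - XY³)` (expressed after clearing
denominators), with coefficients `s_{i,j}`, and `T` has coefficients `t_{i,j} = s_{3i,3j}`,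
then `T = (1 - r(X)Y + (r(X)² - r(X))Y²)/(1 - XY³)`. -/
theorem stmt8 (S T : MvPowerSeries (Fin 2) (ZMod 3))
    (hS : (MvPowerSeries.X 0) ^ 2 * ((1 - MvPowerSeries.X 0 * (MvPowerSeries.X 1) ^ 3) * S) =
      (MvPowerSeries.X 0) ^ 2 - MvPowerSeries.X 0 * rX3 - (rX3 - rX3 ^ 2))
    (hT : ∀ i j : ℕ,
      MvPowerSeries.coeff (Finsupp.single 0 i + Finsupp.single 1 j) T =
        MvPowerSeries.coeff (Finsupp.single 0 (3 * i) + Finsupp.single 1 (3 * j)) S) :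
    (1 - MvPowerSeries.X 0 * (MvPowerSeries.X 1) ^ 3) * T =
      1 - rX * MvPowerSeries.X 1 + (rX ^ 2 - rX) * (MvPowerSeries.X 1) ^ 2 := by
  have hT' : ∀ i j : ℕ, MvPowerSeries.coeff (fs i j) T
      = MvPowerSeries.coeff (fs (3 * i) (3 * j)) S := hT
  apply MvPowerSeries.ext
  intro d
  obtain ⟨i, j, rfl⟩ : ∃ i j : ℕ, d = fs i j := ⟨d 0, d 1, eq_fs d⟩
  -- key equation obtained by multiplying hS by X(1 + XY³ + X²Y⁶)
  have KE : (X 0 : PS) ^ 3 * (X 1) ^ 0 * S - (X 0) ^ 6 * (X 1) ^ 9 * S =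
      (X 0 : PS) ^ 3 * (X 1) ^ 0 * 1 - (X 0) ^ 2 * (X 1) ^ 0 * rX3
        - (X 0) ^ 1 * (X 1) ^ 0 * rX3 + (X 0) ^ 1 * (X 1) ^ 0 * rX3 ^ 2
      + (X 0) ^ 4 * (X 1) ^ 3 * 1 - (X 0) ^ 3 * (X 1) ^ 3 * rX3
        - (X 0) ^ 2 * (X 1) ^ 3 * rX3 + (X 0) ^ 2 * (X 1) ^ 3 * rX3 ^ 2
      + (X 0) ^ 5 * (X 1) ^ 6 * 1 - (X 0) ^ 4 * (X 1) ^ 6 * rX3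
        - (X 0) ^ 3 * (X 1) ^ 6 * rX3 + (X 0) ^ 3 * (X 1) ^ 6 * rX3 ^ 2 := by
    linear_combination (X 0 * (1 + X 0 * (X 1) ^ 3 + (X 0) ^ 2 * (X 1) ^ 6) : PS) * hS
  have KC := congrArg (MvPowerSeries.coeff (fs (3 * i + 3) (3 * j))) KE
  simp only [map_sub, map_add] at KC
  -- left side terms
  have s1 : MvPowerSeries.coeff (fs (3 * i + 3) (3 * j)) ((X 0 : PS) ^ 3 * (X 1) ^ 0 * S)
      = MvPowerSeries.coeff (fs (3 * i) (3 * j)) S := by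
    rw [coeff_mono_mul, if_pos (by omega), show 3 * i + 3 - 3 = 3 * i from by omega,
      Nat.sub_zero]
  have s2 : MvPowerSeries.coeff (fs (3 * i + 3) (3 * j)) ((X 0 : PS) ^ 6 * (X 1) ^ 9 * S)
      = if 1 ≤ i ∧ 3 ≤ j then
          MvPowerSeries.coeff (fs (3 * (i - 1)) (3 * (j - 3))) S else 0 := by
    rw [coeff_mono_mul, show 3 * i + 3 - 6 = 3 * (i - 1) from by omega,
      show 3 * j - 9 = 3 * (j - 3) from by omega]
    split_ifs <;> first | rfl | omega
  -- right side terms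
  have t1 : MvPowerSeries.coeff (fs (3 * i + 3) (3 * j)) ((X 0 : PS) ^ 3 * (X 1) ^ 0 * 1)
      = if i = 0 ∧ j = 0 then 1 else 0 := by
    rw [coeff_mono_mul, show 3 * i + 3 - 3 = 3 * i from by omega, Nat.sub_zero, coeff_one_fs]
    split_ifs <;> first | rfl | omega
  have t2 : MvPowerSeries.coeff (fs (3 * i + 3) (3 * j)) ((X 0 : PS) ^ 2 * (X 1) ^ 0 * rX3)
      = 0 := by
    rw [coeff_mono_mul]
    split_ifs with h
    · exact coeff_rX3_bad _ (by simp only [Good, fs_apply0, fs_apply1]; omega)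
    · rfl
  have t3 : MvPowerSeries.coeff (fs (3 * i + 3) (3 * j)) ((X 0 : PS) ^ 1 * (X 1) ^ 0 * rX3)
      = 0 := by
    rw [coeff_mono_mul]
    split_ifs with h
    · exact coeff_rX3_bad _ (by simp only [Good, fs_apply0, fs_apply1]; omega)
    · rfl
  have t4 : MvPowerSeries.coeff (fs (3 * i + 3) (3 * j))
      ((X 0 : PS) ^ 1 * (X 1) ^ 0 * rX3 ^ 2) = 0 := by
    rw [coeff_mono_mul]
    split_ifs with h
    · exact coeff_rX3sq_bad _ (by simp only [Good, fs_apply0, fs_apply1]; omega)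
    · rfl
  have t5 : MvPowerSeries.coeff (fs (3 * i + 3) (3 * j)) ((X 0 : PS) ^ 4 * (X 1) ^ 3 * 1)
      = 0 := by
    rw [coeff_mono_mul]
    split_ifs with h
    · rw [coeff_one_fs]; split_ifs <;> first | rfl | omega
    · rfl
  have t6 : MvPowerSeries.coeff (fs (3 * i + 3) (3 * j)) ((X 0 : PS) ^ 3 * (X 1) ^ 3 * rX3)
      = if 1 ≤ j then MvPowerSeries.coeff (fs i (j - 1)) rX else 0 := by
    rw [coeff_mono_mul, show 3 * i + 3 - 3 = 3 * i from by omega,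
      show 3 * j - 3 = 3 * (j - 1) from by omega, coeff_rX3_mul3]
    split_ifs <;> first | rfl | omega
  have t7 : MvPowerSeries.coeff (fs (3 * i + 3) (3 * j)) ((X 0 : PS) ^ 2 * (X 1) ^ 3 * rX3)
      = 0 := by
    rw [coeff_mono_mul]
    split_ifs with h
    · exact coeff_rX3_bad _ (by simp only [Good, fs_apply0, fs_apply1]; omega)
    · rfl
  have t8 : MvPowerSeries.coeff (fs (3 * i + 3) (3 * j))
      ((X 0 : PS) ^ 2 * (X 1) ^ 3 * rX3 ^ 2) = 0 := by
    rw [coeff_mono_mul]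
    split_ifs with h
    · exact coeff_rX3sq_bad _ (by simp only [Good, fs_apply0, fs_apply1]; omega)
    · rfl
  have t9 : MvPowerSeries.coeff (fs (3 * i + 3) (3 * j)) ((X 0 : PS) ^ 5 * (X 1) ^ 6 * 1)
      = 0 := by
    rw [coeff_mono_mul]
    split_ifs with h
    · rw [coeff_one_fs]; split_ifs <;> first | rfl | omega
    · rfl
  have t10 : MvPowerSeries.coeff (fs (3 * i + 3) (3 * j))
      ((X 0 : PS) ^ 4 * (X 1) ^ 6 * rX3) = 0 := by
    rw [coeff_mono_mul]
    split_ifs with h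
    · exact coeff_rX3_bad _ (by simp only [Good, fs_apply0, fs_apply1]; omega)
    · rfl
  have t11 : MvPowerSeries.coeff (fs (3 * i + 3) (3 * j))
      ((X 0 : PS) ^ 3 * (X 1) ^ 6 * rX3)
      = if 2 ≤ j then MvPowerSeries.coeff (fs i (j - 2)) rX else 0 := by
    rw [coeff_mono_mul, show 3 * i + 3 - 3 = 3 * i from by omega,
      show 3 * j - 6 = 3 * (j - 2) from by omega, coeff_rX3_mul3]
    split_ifs <;> first | rfl | omega
  have t12 : MvPowerSeries.coeff (fs (3 * i + 3) (3 * j))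
      ((X 0 : PS) ^ 3 * (X 1) ^ 6 * rX3 ^ 2)
      = if 2 ≤ j then MvPowerSeries.coeff (fs i (j - 2)) (rX ^ 2) else 0 := by
    rw [coeff_mono_mul, show 3 * i + 3 - 3 = 3 * i from by omega,
      show 3 * j - 6 = 3 * (j - 2) from by omega, coeff_rX3sq_mul3]
    split_ifs <;> first | rfl | omega
  rw [s1, s2, t1, t2, t3, t4, t5, t6, t7, t8, t9, t10, t11, t12] at KC
  -- now rewrite the goal
  rw [show (1 - MvPowerSeries.X 0 * (MvPowerSeries.X 1) ^ 3) * T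
      = T - (X 0 : PS) ^ 1 * (X 1) ^ 3 * T from by ring,
    show (1 : PS) - rX * MvPowerSeries.X 1 + (rX ^ 2 - rX) * (MvPowerSeries.X 1) ^ 2
      = 1 - rX * (X 1 : PS) ^ 1 + rX ^ 2 * (X 1) ^ 2 - rX * (X 1) ^ 2 from by ring]
  simp only [map_sub, map_add]
  have g2 : MvPowerSeries.coeff (fs i j) ((X 0 : PS) ^ 1 * (X 1) ^ 3 * T)
      = if 1 ≤ i ∧ 3 ≤ j then
          MvPowerSeries.coeff (fs (3 * (i - 1)) (3 * (j - 3))) S else 0 := by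
    rw [coeff_mono_mul]
    split_ifs with h
    · exact hT' (i - 1) (j - 3)
    · rfl
  rw [hT' i j, g2, coeff_one_fs, coeff_mul_ypow, coeff_mul_ypow, coeff_mul_ypow]
  linear_combination KC
end

section
/- The polynomials fₙ(X) for 0 ≤ n < α, defined by f_{3t} = Xᵗ, f_{3t+1} = −r(X)Xᵗ, f_{3t+2} = (r(X)² − r(X))Xᵗ in F₃[X]/(X^α), span F₃[X]/(X^α) as an F₃-vector space. -/
open Classical in
/-- The power series `r(X) = Σ_{m ≥ 0} X^{3^m} ∈ 𝔽₃[[X]]`. -/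
noncomputable def rser : PowerSeries (ZMod 3) :=
  PowerSeries.mk fun n => if ∃ m : ℕ, n = 3 ^ m then 1 else 0

/-- The ring `V = 𝔽₃[X]/(X^α)`. -/
noncomputable abbrev Vring (α : ℕ) : Type :=
  Polynomial (ZMod 3) ⧸ Ideal.span {(Polynomial.X : Polynomial (ZMod 3)) ^ α}

/-- The image of `X` in `𝔽₃[X]/(X^α)`. -/
noncomputable def xbar (α : ℕ) : Vring α := Ideal.Quotient.mk _ Polynomial.X

/-- `r(X)` reduced mod `X^α`. -/
noncomputable def rbar (α : ℕ) : Vring α := Ideal.Quotient.mk _ (PowerSeries.trunc α rser)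

/-- The elements `f₃ₜ = Xᵗ`, `f_{3t+1} = -r(X)Xᵗ`, `f_{3t+2} = (r(X)² - r(X))Xᵗ`. -/
noncomputable def fel (α n : ℕ) : Vring α :=
  (if n % 3 = 0 then 1 else if n % 3 = 1 then -(rbar α) else (rbar α) ^ 2 - rbar α) *
    (xbar α) ^ (n / 3)

lemma cube_coeff (p : Polynomial (ZMod 3)) (d : ℕ) :
    (p ^ 3).coeff d = if 3 ∣ d then p.coeff (d / 3) else 0 := by
  have h : p ^ 3 = Polynomial.expand (ZMod 3) 3 p := by
    have := Polynomial.map_frobenius_expand 3 p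
    rw [ZMod.frobenius_zmod, Polynomial.map_id] at this
    exact this.symm
  rw [h, Polynomial.coeff_expand (by norm_num)]

lemma pow3_div (d : ℕ) (h3 : 3 ∣ d) : (∃ m : ℕ, d / 3 = 3 ^ m) ↔ (∃ m : ℕ, d = 3 ^ m) := by
  constructor
  · rintro ⟨m, hm⟩
    exact ⟨m + 1, by rw [pow_succ, ← hm]; omega⟩
  · rintro ⟨m, hm⟩
    match m with
    | 0 => omega
    | m + 1 =>
      refine ⟨m, ?_⟩
      rw [hm, pow_succ, Nat.mul_div_cancel _ (by norm_num)]

lemma pow3_one (d : ℕ) (h3 : ¬ 3 ∣ d) : (∃ m : ℕ, d = 3 ^ m) ↔ d = 1 := by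
  constructor
  · rintro ⟨m, hm⟩
    match m with
    | 0 => exact hm
    | m + 1 => exact absurd ⟨3 ^ m, by rw [hm, pow_succ, Nat.mul_comm]⟩ h3
  · rintro rfl; exact ⟨0, rfl⟩

open Classical in
lemma trunc_cube (α : ℕ) :
    (Polynomial.X : Polynomial (ZMod 3)) ^ α ∣
      (PowerSeries.trunc α rser) ^ 3 - PowerSeries.trunc α rser + Polynomial.X := by
  rw [Polynomial.X_pow_dvd_iff]
  intro d hd
  have hc : ∀ k, (PowerSeries.trunc α rser).coeff k
      = if k < α then (if ∃ m : ℕ, k = 3 ^ m then (1 : ZMod 3) else 0) else 0 := by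
    intro k
    rw [PowerSeries.coeff_trunc, rser, PowerSeries.coeff_mk]
  rw [Polynomial.coeff_add, Polynomial.coeff_sub, cube_coeff, Polynomial.coeff_X]
  by_cases h3 : 3 ∣ d
  · have hd3 : d / 3 < α := lt_of_le_of_lt (Nat.div_le_self d 3) hd
    rw [if_pos h3, hc, hc, if_pos hd3, if_pos hd]
    have hne : ¬ (1 = d) := by rintro rfl; omega
    rw [if_neg hne, add_zero]
    by_cases hp : ∃ m : ℕ, d = 3 ^ m
    · rw [if_pos ((pow3_div d h3).mpr hp), if_pos hp, sub_self]
    · rw [if_neg (fun h => hp ((pow3_div d h3).mp h)), if_neg hp, sub_self]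
  · rw [if_neg h3, hc, if_pos hd]
    by_cases h1 : d = 1
    · subst h1
      rw [if_pos ⟨0, rfl⟩, if_pos rfl]; ring
    · rw [if_neg (fun h => h1 ((pow3_one d h3).mp h)), if_neg (fun h => h1 h.symm)]; ring

lemma rbar_cube (α : ℕ) : rbar α ^ 3 = rbar α - xbar α := by
  have h : rbar α ^ 3 - rbar α + xbar α = 0 := by
    rw [rbar, xbar, ← map_pow, ← map_sub, ← map_add, Ideal.Quotient.eq_zero_iff_mem,
      Ideal.mem_span_singleton]
    exact trunc_cube α
  linear_combination h

lemma rbar_factor (α : ℕ) : ∃ w : Vring α, rbar α = xbar α * w := by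
  have h : (Polynomial.X : Polynomial (ZMod 3)) ∣ PowerSeries.trunc α rser := by
    rw [Polynomial.X_dvd_iff, PowerSeries.coeff_trunc]
    split
    · rw [rser, PowerSeries.coeff_mk, if_neg]
      rintro ⟨m, hm⟩
      exact (pow_pos (by norm_num : (0:ℕ) < 3) m).ne' hm.symm
    · rfl
  obtain ⟨q, hq⟩ := h
  exact ⟨Ideal.Quotient.mk _ q, by rw [rbar, xbar, hq, map_mul]⟩

lemma xbar_pow_zero (α j : ℕ) (h : α ≤ j) : xbar α ^ j = 0 := by
  rw [xbar, ← map_pow, Ideal.Quotient.eq_zero_iff_mem, Ideal.mem_span_singleton]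
  exact pow_dvd_pow _ h

noncomputable def Str (α : ℕ) : Submodule (ZMod 3) (Vring α) :=
  Submodule.span (ZMod 3) (Set.range fun n : Fin α => fel α (n : ℕ))

lemma fel_mem (α n : ℕ) (h : n < α) : fel α n ∈ Str α :=
  Submodule.subset_span ⟨⟨n, h⟩, rfl⟩

lemma claimC (α : ℕ) : ∀ a t : ℕ, 3 * t + a < α → rbar α ^ a * xbar α ^ t ∈ Str α := by
  intro a
  induction a using Nat.strong_induction_on with
  | _ a ih =>
    intro t h
    match a with
    | 0 =>
      have he : fel α (3 * t) = rbar α ^ 0 * xbar α ^ t := by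
        rw [fel, Nat.mul_mod_right, Nat.mul_div_cancel_left _ (by norm_num : 0 < 3)]
        simp
      exact he ▸ fel_mem α (3 * t) (by omega)
    | 1 =>
      have he : rbar α ^ 1 * xbar α ^ t = -fel α (3 * t + 1) := by
        rw [fel, Nat.mul_add_mod, Nat.mul_add_div (by norm_num : 0 < 3)]
        norm_num
        ring
      rw [he]
      exact neg_mem (fel_mem α (3 * t + 1) (by omega))
    | 2 =>
      have he : rbar α ^ 2 * xbar α ^ t = fel α (3 * t + 2) - fel α (3 * t + 1) := by
        rw [fel, fel, Nat.mul_add_mod, Nat.mul_add_mod, Nat.mul_add_div (by norm_num : 0 < 3),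
          Nat.mul_add_div (by norm_num : 0 < 3)]
        norm_num
        ring
      rw [he]
      exact sub_mem (fel_mem α (3 * t + 2) (by omega)) (fel_mem α (3 * t + 1) (by omega))
    | n + 3 =>
      have he : rbar α ^ (n + 3) * xbar α ^ t
          = rbar α ^ (n + 1) * xbar α ^ t - rbar α ^ n * xbar α ^ (t + 1) := by
        rw [pow_add, rbar_cube]
        ring
      rw [he]
      exact sub_mem (ih (n + 1) (by omega) t (by omega)) (ih n (by omega) (t + 1) (by omega))

lemma spanX' (α : ℕ) (p : Polynomial (ZMod 3)) :
    Ideal.Quotient.mk (Ideal.span {(Polynomial.X : Polynomial (ZMod 3)) ^ α}) p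
      ∈ Submodule.span (ZMod 3) (Set.range fun j : ℕ => xbar α ^ j) := by
  induction p using Polynomial.induction_on' with
  | add p q hp hq => rw [map_add]; exact add_mem hp hq
  | monomial n a =>
    have he : Ideal.Quotient.mk (Ideal.span {(Polynomial.X : Polynomial (ZMod 3)) ^ α})
        (Polynomial.monomial n a) = a • xbar α ^ n := by
      rw [← Polynomial.smul_X_eq_monomial, ← Ideal.Quotient.mkₐ_eq_mk (ZMod 3), map_smul,
        map_pow, xbar, Ideal.Quotient.mkₐ_eq_mk]
    rw [he]
    exact Submodule.smul_mem _ _ (Submodule.subset_span ⟨n, rfl⟩)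

lemma spanX (α : ℕ) :
    (⊤ : Submodule (ZMod 3) (Vring α))
      ≤ Submodule.span (ZMod 3) (Set.range fun j : ℕ => xbar α ^ j) := by
  intro v _
  obtain ⟨p, rfl⟩ := Ideal.Quotient.mk_surjective v
  exact spanX' α p

lemma mul_mem_Str (α K : ℕ) (H : ∀ i, K ≤ i → xbar α ^ i ∈ Str α) (v : Vring α) :
    xbar α ^ K * v ∈ Str α := by
  have hv : v ∈ Submodule.span (ZMod 3) (Set.range fun j : ℕ => xbar α ^ j) :=
    spanX α trivial
  induction hv using Submodule.span_induction with
  | mem x hx =>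
    obtain ⟨j, rfl⟩ := hx
    rw [← pow_add]
    exact H (K + j) (by omega)
  | zero => rw [mul_zero]; exact zero_mem _
  | add x y _ _ hx hy => rw [mul_add]; exact add_mem hx hy
  | smul c x _ hx => rw [mul_smul_comm]; exact Submodule.smul_mem _ _ hx

lemma main_ind (α : ℕ) : ∀ m : ℕ, ∀ j, α - m ≤ j → xbar α ^ j ∈ Str α := by
  intro m
  induction m with
  | zero =>
    intro j hj
    rw [xbar_pow_zero α j (by omega)]
    exact zero_mem _
  | succ m ihm =>
    intro j hj
    rcases le_or_gt (α - m) j with hle | hlt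
    · exact ihm j hle
    · have hj' : j = α - m - 1 ∧ j < α ∧ m < α := by omega
      obtain ⟨hje, hjα, hmα⟩ := hj'
      -- rbar^j ∈ Str
      have h1 : rbar α ^ j ∈ Str α := by
        have := claimC α j 0 (by omega)
        simpa using this
      -- rbar^j = xbar^j + xbar^(j+2) * e
      obtain ⟨w, hw⟩ := rbar_factor α
      have hr : rbar α = xbar α * (1 + xbar α ^ 2 * w ^ 3) := by
        have h3 : rbar α = xbar α + (xbar α * w) ^ 3 := by
          rw [← hw]; linear_combination -(rbar_cube α)
        rw [h3]; ring
      obtain ⟨c, hc⟩ : (xbar α ^ 2 * w ^ 3) ∣ ((1 + xbar α ^ 2 * w ^ 3) ^ j - 1) := by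
        have := sub_dvd_pow_sub_pow (1 + xbar α ^ 2 * w ^ 3) 1 j
        simpa using this
      have key : xbar α ^ j = rbar α ^ j - xbar α ^ (j + 2) * (w ^ 3 * c) := by
        rw [hr, mul_pow]
        have h1j : (1 + xbar α ^ 2 * w ^ 3) ^ j = 1 + xbar α ^ 2 * w ^ 3 * c := by
          linear_combination hc
        rw [h1j, pow_add]
        ring
      rw [key]
      refine sub_mem h1 ?_
      exact mul_mem_Str α (j + 2) (fun i hi => ihm i (by omega)) _

/-- The `fₙ(X)`, `0 ≤ n < α`, span `𝔽₃[X]/(X^α)` as an `𝔽₃`-vector space. -/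
theorem stmt11 (α : ℕ) :
    Submodule.span (ZMod 3) (Set.range fun n : Fin α => fel α (n : ℕ)) = ⊤ := by
  rw [eq_top_iff]
  refine le_trans (spanX α) ?_
  rw [Submodule.span_le]
  rintro - ⟨j, rfl⟩
  exact main_ind α α j (by omega)
end

section
/- Let d be a nonzero element of the ring of integers O of a complete nonarchimedean valued field, s a positive integer, and N = (nᵢⱼ)_{0≤i,j<3s} a matrix with nᵢⱼ ∈ dʲ·O for all i,j, and nᵢⱼ = 0 whenever 3 ∤ j. Write det(1 − TN) = Σ_α a_α T^α. Then a_α/d^{3α(α−1)/2} ∈ O for all α. -/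
open Polynomial Finset

private lemma ultra_sum_bound {M : Type*} [SeminormedAddCommGroup M] [IsUltrametricDist M]
    {ι : Type*} (t : Finset ι) (f : ι → M) {C : ℝ} (hC : 0 ≤ C)
    (h : ∀ i ∈ t, ‖f i‖ ≤ C) : ‖∑ i ∈ t, f i‖ ≤ C := by
  rcases t.eq_empty_or_nonempty with rfl | ht
  · simpa using hC
  · obtain ⟨i, hi, hle⟩ := IsUltrametricDist.exists_norm_finset_sum_le_of_nonempty ht f
    exact hle.trans (h i hi)

private lemma strictMono_nat_le {n : ℕ} (f : Fin n → ℕ) (hf : StrictMono f) :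
    ∀ m : ℕ, ∀ hm : m < n, m ≤ f ⟨m, hm⟩ := by
  intro m
  induction m with
  | zero => intro _; omega
  | succ p ih =>
    intro hm
    have h1 := ih (by omega)
    have h2 : f ⟨p, by omega⟩ < f ⟨p + 1, hm⟩ := hf (by simp only [Fin.lt_def]; omega)
    omega

private lemma sum_range_card_le (T : Finset ℕ) :
    ∑ k ∈ Finset.range T.card, k ≤ ∑ t ∈ T, t := by
  classical
  have h1 : ∑ t ∈ T, t = ∑ k : Fin T.card, (T.orderEmbOfFin rfl k : ℕ) := by
    refine (Finset.sum_bij (fun (k : Fin T.card) _ => T.orderEmbOfFin rfl k) ?_ ?_ ?_ ?_).symm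
    · intro k _; exact T.orderEmbOfFin_mem rfl k
    · intro a _ b _ hab; exact (T.orderEmbOfFin rfl).injective hab
    · intro t ht
      have : t ∈ Set.range (T.orderEmbOfFin rfl) := by
        rw [Finset.range_orderEmbOfFin]; exact ht
      obtain ⟨k, hk⟩ := this
      exact ⟨k, Finset.mem_univ k, hk⟩
    · intro a _; rfl
  rw [h1, Finset.sum_range]
  refine Finset.sum_le_sum fun k _ => ?_
  simpa using strictMono_nat_le _ (T.orderEmbOfFin rfl).strictMono k.val k.isLt

private lemma sum_div3_le {S : Finset ℕ} (h3 : ∀ i ∈ S, 3 ∣ i) :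
    3 * (S.card * (S.card - 1)) / 2 ≤ ∑ i ∈ S, i := by
  classical
  set T := S.image (· / 3) with hT
  have hinj : Set.InjOn (· / 3) S := by
    intro a ha b hb hab
    obtain ⟨a', rfl⟩ := h3 a ha
    obtain ⟨b', rfl⟩ := h3 b hb
    simp only at hab
    omega
  have hcard : T.card = S.card := Finset.card_image_of_injOn hinj
  have hsum : ∑ i ∈ S, i = 3 * ∑ t ∈ T, t := by
    rw [hT, Finset.sum_image (fun a ha b hb => hinj ha hb), Finset.mul_sum]
    refine Finset.sum_congr rfl fun i hi => ?_
    obtain ⟨a', rfl⟩ := h3 i hi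
    omega
  have h2 := sum_range_card_le T
  rw [hcard, Finset.sum_range_id] at h2
  have heven : Even (S.card * (S.card - 1)) := by
    rcases Nat.even_or_odd S.card with h | h
    · exact h.mul_right _
    · rcases Nat.eq_zero_or_pos S.card with h0 | h0
      · simp [h0]
      · exact ((Nat.Odd.sub_odd h odd_one)).mul_left _
  rw [Nat.mul_div_assoc 3 heven.two_dvd]
  omega

/-- Let `O` be the closed unit ball of a complete nonarchimedean field `K`, `d ≠ 0` with
`|d| ≤ 1`, and `N` a `3s × 3s` matrix with `nᵢⱼ ∈ dʲ·O` (i.e. `‖nᵢⱼ‖ ≤ ‖d‖ʲ`) and `nᵢⱼ = 0`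
whenever `3 ∤ j`.  Writing `det(1 - T·N) = Σ_α a_α T^α`, we have
`a_α / d^{3α(α-1)/2} ∈ O`, i.e. `‖a_α‖ ≤ ‖d‖^{3α(α-1)/2}`. -/
theorem stmt12 {K : Type*} [NormedField K] [CompleteSpace K] [IsUltrametricDist K]
    (d : K) (hd : d ≠ 0) (hd1 : ‖d‖ ≤ 1) (s : ℕ) (hs : 0 < s)
    (N : Matrix (Fin (3 * s)) (Fin (3 * s)) K)
    (hN : ∀ i j : Fin (3 * s), ‖N i j‖ ≤ ‖d‖ ^ (j : ℕ))
    (hN3 : ∀ i j : Fin (3 * s), ¬ (3 ∣ (j : ℕ)) → N i j = 0)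
    (α : ℕ) :
    ‖((1 - (Polynomial.X : Polynomial K) • N.map Polynomial.C :
        Matrix (Fin (3 * s)) (Fin (3 * s)) (Polynomial K)).det).coeff α‖ ≤
      ‖d‖ ^ ((3 * (α * (α - 1))) / 2) := by
  classical
  set M : Matrix (Fin (3 * s)) (Fin (3 * s)) (Polynomial K) :=
    1 - (Polynomial.X : Polynomial K) • N.map Polynomial.C with hM
  have hd0 : (0 : ℝ) < ‖d‖ := norm_pos_iff.mpr hd
  have hbound : (0 : ℝ) ≤ ‖d‖ ^ ((3 * (α * (α - 1))) / 2) := by positivity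
  -- coefficients of the matrix entries
  have hMe : ∀ i j : Fin (3 * s),
      M i j = Polynomial.C (if i = j then (1 : K) else 0)
        - Polynomial.X * Polynomial.C (N i j) := by
    intro i j
    simp [hM, Matrix.sub_apply, Matrix.one_apply, Matrix.smul_apply, Matrix.map_apply,
      smul_eq_mul, apply_ite (Polynomial.C (R := K))]
  have hco : ∀ (i j : Fin (3 * s)) (k : ℕ), (M i j).coeff k =
      if k = 0 then (if i = j then (1 : K) else 0)
      else if k = 1 then -(N i j) else 0 := by
    intro i j k
    rw [hMe i j]
    rcases k with _ | _ | k <;> split_ifs <;>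
      simp_all [Polynomial.coeff_sub, Polynomial.coeff_C, Polynomial.coeff_X_mul,
        Polynomial.coeff_one]
  rw [Matrix.det_apply']
  rw [Polynomial.finset_sum_coeff]
  refine ultra_sum_bound _ _ hbound ?_
  intro σ _
  -- strip the sign
  have hsign : ‖(Equiv.Perm.sign σ • ∏ i, M (σ i) i : Polynomial K).coeff α‖
      = ‖(∏ i, M (σ i) i : Polynomial K).coeff α‖ := by
    rcases Int.units_eq_one_or (Equiv.Perm.sign σ) with h | h <;>
      simp [h, Units.smul_def]
  rw [show ((Equiv.Perm.sign σ : ℤ) : Polynomial K) * ∏ i, M (σ i) i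
      = Equiv.Perm.sign σ • ∏ i, M (σ i) i by
    simp [Units.smul_def, zsmul_eq_mul]]
  rw [hsign]
  -- expand the product coefficient via power series
  have hcast : ((∏ i, M (σ i) i : Polynomial K) : PowerSeries K)
      = ∏ i : Fin (3 * s), ((M (σ i) i : Polynomial K) : PowerSeries K) := by
    simp only [← Polynomial.coeToPowerSeries.ringHom_apply]
    exact map_prod _ _ _
  have hc : (∏ i, M (σ i) i : Polynomial K).coeff α
      = ∑ l ∈ Finset.finsuppAntidiag (Finset.univ : Finset (Fin (3 * s))) α,
          ∏ i : Fin (3 * s), (M (σ i) i).coeff (l i) := by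
    simp only [← Polynomial.coeff_coe, hcast, PowerSeries.coeff_prod]
  rw [hc]
  refine ultra_sum_bound _ _ hbound ?_
  intro l hl
  rw [Finset.mem_finsuppAntidiag] at hl
  obtain ⟨hlsum, -⟩ := hl
  by_cases hbig : ∃ i, 2 ≤ l i
  · obtain ⟨i, hi⟩ := hbig
    have : (M (σ i) i).coeff (l i) = 0 := by
      rw [hco]; rw [if_neg (by omega), if_neg (by omega)]
    rw [Finset.prod_eq_zero (Finset.mem_univ i) this]
    simpa using hbound
  · push_neg at hbig
    set S : Finset (Fin (3 * s)) := Finset.univ.filter (fun i => l i = 1) with hS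
    have hScard : S.card = α := by
      rw [← hlsum]
      rw [show (Finset.univ.sum l) = ∑ i : Fin (3 * s), (if i ∈ S then 1 else 0) from
        Finset.sum_congr rfl fun i _ => by
          simp only [hS, Finset.mem_filter, Finset.mem_univ, true_and]
          have := hbig i; split <;> omega]
      simp
    by_cases hdvd : ∀ i ∈ S, 3 ∣ (i : ℕ)
    · -- bound the product by norms
      have hterm : ∀ i : Fin (3 * s), ‖(M (σ i) i).coeff (l i)‖
          ≤ if i ∈ S then ‖d‖ ^ (i : ℕ) else 1 := by
        intro i
        have h01 : l i = 0 ∨ l i = 1 := by have := hbig i; omega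
        rcases h01 with h1 | h1
        · have hnot : i ∉ S := by simp [hS, h1]
          rw [hco, h1, if_neg hnot, if_pos rfl]
          split_ifs <;> simp
        · have hiS : i ∈ S := by simp [hS, h1]
          rw [hco, h1, if_pos hiS,
            if_neg (by norm_num : (1 : ℕ) ≠ 0), if_pos rfl, norm_neg]
          exact hN _ i
      calc ‖∏ i : Fin (3 * s), (M (σ i) i).coeff (l i)‖
          = ∏ i : Fin (3 * s), ‖(M (σ i) i).coeff (l i)‖ := norm_prod _ _
        _ ≤ ∏ i : Fin (3 * s), (if i ∈ S then ‖d‖ ^ (i : ℕ) else 1) :=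
            Finset.prod_le_prod (fun i _ => norm_nonneg _) (fun i _ => hterm i)
        _ = ∏ i ∈ S, ‖d‖ ^ (i : ℕ) := by
            rw [Finset.prod_ite_mem, Finset.univ_inter]
        _ = ‖d‖ ^ (∑ i ∈ S, (i : ℕ)) := by
            rw [Finset.prod_pow_eq_pow_sum]
        _ ≤ ‖d‖ ^ ((3 * (α * (α - 1))) / 2) := by
            apply pow_le_pow_of_le_one hd0.le hd1
            -- combinatorial bound
            have h3 : ∀ m ∈ S.image (Fin.val), 3 ∣ m := by
              intro m hm
              obtain ⟨i, hi, rfl⟩ := Finset.mem_image.mp hm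
              exact hdvd i hi
            have hcard' : (S.image (Fin.val)).card = α := by
              rw [Finset.card_image_of_injective _ Fin.val_injective, hScard]
            have := sum_div3_le h3
            rw [hcard'] at this
            rwa [Finset.sum_image (fun a _ b _ h => Fin.val_injective h)] at this
    · push_neg at hdvd
      obtain ⟨i, hiS, hi3⟩ := hdvd
      have hl1 : l i = 1 := by simpa [hS] using hiS
      have : (M (σ i) i).coeff (l i) = 0 := by
        rw [hco, hl1]
        simp [hN3 _ i hi3]
      rw [Finset.prod_eq_zero (Finset.mem_univ i) this]
      simpa using hbound
end
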